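/- The graph of lines of the projective rectangle L_2^2 (order (2,4), 16 vertices, 9-regular, strongly regular with λ=4, μ=6) is isomorphic to the tensor (categorical) product K_4 × K_4 of two complete graphs on 4 vertices. -/

import Mathlib

open scoped Classical

/-- The ordinary line of the projective rectangle `L_2^k` indexed by `(g,h) ∈ 𝔽₂ᵏ × 𝔽₂ᵏ`:
the set `{a_g, b_{g+h}, c_h}`, where the ordinary ground set is encoded as
`Fin 3 × (Fin k → ZMod 2)` (first coordinate 0 for `A`, 1 for `B`, 2 for `C`). -/
def L2kLine (k : ℕ) (gh : (Fin k → ZMod 2) × (Fin k → ZMod 2)) :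
    Set (Fin 3 × (Fin k → ZMod 2)) :=
  {(0, gh.1), (1, gh.1 + gh.2), (2, gh.2)}

/-- The graph of lines of `L_2^k`: vertices are the ordinary lines, two adjacent iff they
share a point. -/
def L2kGraph (k : ℕ) : SimpleGraph ((Fin k → ZMod 2) × (Fin k → ZMod 2)) where
  Adj x y := x ≠ y ∧ (L2kLine k x ∩ L2kLine k y).Nonempty
  symm := by
    constructor
    rintro a b ⟨h, p, hp1, hp2⟩
    exact ⟨h.symm, p, hp2, hp1⟩
  loopless := ⟨fun a ha => ha.1 rfl⟩

/-- The tensor (categorical) product of two simple graphs. -/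
def tensorProd {α β : Type*} (G : SimpleGraph α) (H : SimpleGraph β) :
    SimpleGraph (α × β) where
  Adj p q := G.Adj p.1 q.1 ∧ H.Adj p.2 q.2
  symm := ⟨fun _ _ h => ⟨h.1.symm, h.2.symm⟩⟩
  loopless := ⟨fun p hp => G.loopless.irrefl p.1 hp.1⟩

def myEnc (g : Fin 2 → ZMod 2) : Fin 4 :=
  ⟨(g 0).val + 2 * (g 1).val, by
    have h0 : (g 0).val < 2 := (g 0).val_lt
    have h1 : (g 1).val < 2 := (g 1).val_lt
    omega⟩

def myDec : Fin 4 → (Fin 2 → ZMod 2) := ![![0,0], ![1,0], ![0,1], ![1,1]]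

def myTbl : Fin 4 → Fin 4 → Fin 4 × Fin 4 :=
  ![![(0,0),(1,1),(2,2),(3,3)],
    ![(2,3),(3,2),(0,1),(1,0)],
    ![(3,1),(2,0),(1,3),(0,2)],
    ![(1,2),(0,3),(3,0),(2,1)]]

def myTblInv : Fin 4 → Fin 4 → Fin 4 × Fin 4 :=
  ![![(0,0),(1,2),(2,3),(3,1)],
    ![(1,3),(0,1),(3,0),(2,2)],
    ![(2,1),(3,3),(0,2),(1,0)],
    ![(3,2),(2,0),(1,1),(0,3)]]

lemma adj_iff (x y : (Fin 2 → ZMod 2) × (Fin 2 → ZMod 2)) :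
    (L2kGraph 2).Adj x y ↔
      x ≠ y ∧ (x.1 = y.1 ∨ x.1 + x.2 = y.1 + y.2 ∨ x.2 = y.2) := by
  constructor
  · rintro ⟨hne, p, hp1, hp2⟩
    refine ⟨hne, ?_⟩
    simp only [L2kLine, Set.mem_insert_iff, Set.mem_singleton_iff, Prod.ext_iff] at hp1 hp2
    rcases hp1 with ⟨h, h'⟩ | ⟨h, h'⟩ | ⟨h, h'⟩ <;>
      rcases hp2 with ⟨g, g'⟩ | ⟨g, g'⟩ | ⟨g, g'⟩ <;>
      simp_all
  · rintro ⟨hne, h | h | h⟩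
    · exact ⟨hne, (0, x.1), by simp [L2kLine], by simp [L2kLine, h]⟩
    · exact ⟨hne, (1, x.1 + x.2), by simp [L2kLine], by simp [L2kLine, h]⟩
    · exact ⟨hne, (2, x.2), by simp [L2kLine], by simp [L2kLine, h]⟩

lemma tensor_top_adj (p q : Fin 4 × Fin 4) :
    (tensorProd (⊤ : SimpleGraph (Fin 4)) ⊤).Adj p q ↔ p.1 ≠ q.1 ∧ p.2 ≠ q.2 := by
  simp [tensorProd]

/-- The graph of lines of `L_2^2` (16 vertices, 9-regular, strongly regular
with λ = 4, μ = 6) is isomorphic to the tensor product `K₄ × K₄`. -/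
theorem stmt18 :
    Nonempty (L2kGraph 2 ≃g
      tensorProd (⊤ : SimpleGraph (Fin 4)) (⊤ : SimpleGraph (Fin 4))) := by
  refine ⟨{ toFun := fun x => myTbl (myEnc x.1) (myEnc x.2),
            invFun := fun y => (myDec (myTblInv y.1 y.2).1, myDec (myTblInv y.1 y.2).2),
            left_inv := by decide,
            right_inv := by decide,
            map_rel_iff' := ?_ }⟩
  intro a b
  rw [tensor_top_adj, adj_iff]
  revert a b
  decide
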